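/- Let M ∈ R^{n×n} have rank r with reduced SVD M = UΣV^T and let Ω ⊆ [n]×[n] be given. If p ≥ 1/n^{10} and ‖P_T R_Ω P_T − P_T‖_op ≤ 1/2, then for every Z ∈ R^{n×n} with P_Ω(Z) = 0 one has ‖P_T(Z)‖_F ≤ √2 · n^5 · ‖P_{T⊥}(Z)‖_*. -/

import Mathlib

open MeasureTheory Matrix

noncomputable section

/-- Frobenius norm of a real matrix. -/
def frobNorm {m n : ℕ} (X : Matrix (Fin m) (Fin n) ℝ) : ℝ :=
  Real.sqrt (∑ i, ∑ j, (X i j) ^ 2)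

/-- Nuclear norm: sum of singular values (square roots of eigenvalues of XᵀX). -/
def nuclearNorm {m n : ℕ} (X : Matrix (Fin m) (Fin n) ℝ) : ℝ :=
  ∑ i, Real.sqrt ((show (Xᵀ * X).IsHermitian by
    simpa only [Matrix.conjTranspose_eq_transpose_of_trivial] using
      Matrix.isHermitian_conjTranspose_mul_self X).eigenvalues i)

/-- Spectral norm: operator norm of the associated Euclidean linear map. -/
def specNorm {m n : ℕ} (X : Matrix (Fin m) (Fin n) ℝ) : ℝ :=
  ‖(Matrix.toEuclideanLin X).toContinuousLinearMap‖

/-- Entrywise ℓ∞ norm. -/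
def linf {m n : ℕ} (X : Matrix (Fin m) (Fin n) ℝ) : ℝ := ⨆ i, ⨆ j, |X i j|

/-- ℓ∞,2 norm: maximum of the largest row and column ℓ₂ norms. -/
def linf2 {n : ℕ} (X : Matrix (Fin n) (Fin n) ℝ) : ℝ :=
  max (⨆ i, Real.sqrt (∑ j, (X i j) ^ 2)) (⨆ j, Real.sqrt (∑ i, (X i j) ^ 2))

/-- Operator norm (w.r.t. the Frobenius norm) of a map on n×n matrices. -/
def opNormMap {n : ℕ} (A : Matrix (Fin n) (Fin n) ℝ → Matrix (Fin n) (Fin n) ℝ) : ℝ :=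
  ⨆ Z : {Z : Matrix (Fin n) (Fin n) ℝ // frobNorm Z ≤ 1}, frobNorm (A Z.1)

/-- P_Ω for a Boolean sample ω. -/
def projB {n : ℕ} (ω : Fin n × Fin n → Bool) (Z : Matrix (Fin n) (Fin n) ℝ) :
    Matrix (Fin n) (Fin n) ℝ := fun i j => if ω (i, j) then Z i j else 0

open Classical in
/-- P_Ω for a set Ω of indices. -/
def projS {n : ℕ} (Ω : Set (Fin n × Fin n)) (Z : Matrix (Fin n) (Fin n) ℝ) :
    Matrix (Fin n) (Fin n) ℝ := fun i j => if (i, j) ∈ Ω then Z i j else 0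

/-- The tangent-space projection P_T determined by U and V. -/
def projT {n r : ℕ} (U V : Matrix (Fin n) (Fin r) ℝ) (Z : Matrix (Fin n) (Fin n) ℝ) :
    Matrix (Fin n) (Fin n) ℝ :=
  U * Uᵀ * Z + Z * V * Vᵀ - U * Uᵀ * Z * V * Vᵀ

/-- Bernoulli(p) measure on Bool. -/
def bern (p : ℝ) : Measure Bool :=
  ENNReal.ofReal p • Measure.dirac true + ENNReal.ofReal (1 - p) • Measure.dirac false

/-- Product Bernoulli(p) measure on index samples: each (i,j) observed independently
with probability p. -/
def sampleMeasure (n : ℕ) (p : ℝ) : Measure (Fin n × Fin n → Bool) :=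
  Measure.pi fun _ => bern p

/-- ℓ₂ norm of the i-th row of U, i.e. ‖Uᵀ e_i‖₂. -/
def rowNorm {n r : ℕ} (U : Matrix (Fin n) (Fin r) ℝ) (i : Fin n) : ℝ :=
  Real.sqrt (∑ k, (U i k) ^ 2)

namespace S5

attribute [local instance] Matrix.frobeniusNormedAddCommGroup Matrix.frobeniusNormedSpace

lemma frob_eq_norm {m n : ℕ} (X : Matrix (Fin m) (Fin n) ℝ) : frobNorm X = ‖X‖ := by
  rw [Matrix.frobenius_norm_def, frobNorm, Real.sqrt_eq_rpow]
  congr 1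
  refine Finset.sum_congr rfl fun i _ => Finset.sum_congr rfl fun j _ => ?_
  rw [Real.rpow_two, Real.norm_eq_abs, sq_abs]

def fip {m n : ℕ} (X Y : Matrix (Fin m) (Fin n) ℝ) : ℝ := ∑ i, ∑ j, X i j * Y i j

lemma fip_eq_trace {m k : ℕ} (X Y : Matrix (Fin m) (Fin k) ℝ) :
    fip X Y = Matrix.trace (Xᵀ * Y) := by
  unfold fip Matrix.trace
  simp only [Matrix.diag_apply, Matrix.mul_apply, Matrix.transpose_apply]
  exact Finset.sum_comm

lemma frob_sq {m k : ℕ} (X : Matrix (Fin m) (Fin k) ℝ) : frobNorm X ^ 2 = fip X X := by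
  unfold frobNorm fip
  rw [Real.sq_sqrt (by positivity)]
  exact Finset.sum_congr rfl fun i _ => Finset.sum_congr rfl fun j _ => (sq (X i j)) ▸ rfl

lemma frob_nonneg {m k : ℕ} (X : Matrix (Fin m) (Fin k) ℝ) : 0 ≤ frobNorm X :=
  Real.sqrt_nonneg _

lemma frob_zero {m k : ℕ} : frobNorm (0 : Matrix (Fin m) (Fin k) ℝ) = 0 := by
  simp [frobNorm]

lemma frob_neg {m k : ℕ} (X : Matrix (Fin m) (Fin k) ℝ) : frobNorm (-X) = frobNorm X := by
  simp [frobNorm, Matrix.neg_apply]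

lemma frob_smul {m k : ℕ} (c : ℝ) (X : Matrix (Fin m) (Fin k) ℝ) :
    frobNorm (c • X) = |c| * frobNorm X := by
  rw [frob_eq_norm, frob_eq_norm, norm_smul, Real.norm_eq_abs]

lemma frob_eq_zero {m k : ℕ} {X : Matrix (Fin m) (Fin k) ℝ} (h : frobNorm X = 0) : X = 0 := by
  rw [frob_eq_norm] at h
  exact norm_eq_zero.mp h

lemma neg_frob_le_fip {m k : ℕ} (X Y : Matrix (Fin m) (Fin k) ℝ) :
    -(frobNorm X * frobNorm Y) ≤ fip X Y := by
  have h := Real.sum_mul_le_sqrt_mul_sqrt (Finset.univ : Finset (Fin m × Fin k))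
    (fun p => -X p.1 p.2) (fun p => Y p.1 p.2)
  simp only [neg_mul, Finset.sum_neg_distrib, neg_sq] at h
  have e1 : ∑ p : Fin m × Fin k, X p.1 p.2 * Y p.1 p.2 = fip X Y := by
    simp [fip, Fintype.sum_prod_type]
  have e2 : Real.sqrt (∑ p : Fin m × Fin k, X p.1 p.2 ^ 2) = frobNorm X := by
    simp [frobNorm, Fintype.sum_prod_type]
  have e3 : Real.sqrt (∑ p : Fin m × Fin k, Y p.1 p.2 ^ 2) = frobNorm Y := by
    simp [frobNorm, Fintype.sum_prod_type]
  rw [e1, e2, e3] at h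
  linarith

lemma fip_mul_left {n : ℕ} (A X Y : Matrix (Fin n) (Fin n) ℝ) :
    fip (A * X) Y = fip X (Aᵀ * Y) := by
  rw [fip_eq_trace, fip_eq_trace, Matrix.transpose_mul, Matrix.mul_assoc]

lemma fip_mul_right {n : ℕ} (X B Y : Matrix (Fin n) (Fin n) ℝ) :
    fip (X * B) Y = fip X (Y * Bᵀ) := by
  rw [fip_eq_trace, fip_eq_trace, Matrix.transpose_mul, Matrix.mul_assoc,
    Matrix.trace_mul_comm, Matrix.mul_assoc]

lemma fip_add_left {m k : ℕ} (X Y Z : Matrix (Fin m) (Fin k) ℝ) :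
    fip (X + Y) Z = fip X Z + fip Y Z := by
  simp [fip, Matrix.add_apply, add_mul, Finset.sum_add_distrib]

lemma fip_sub_left {m k : ℕ} (X Y Z : Matrix (Fin m) (Fin k) ℝ) :
    fip (X - Y) Z = fip X Z - fip Y Z := by
  simp [fip, Matrix.sub_apply, sub_mul, Finset.sum_sub_distrib]

lemma fip_add_right {m k : ℕ} (X Y Z : Matrix (Fin m) (Fin k) ℝ) :
    fip X (Y + Z) = fip X Y + fip X Z := by
  simp [fip, Matrix.add_apply, mul_add, Finset.sum_add_distrib]

lemma fip_sub_right {m k : ℕ} (X Y Z : Matrix (Fin m) (Fin k) ℝ) :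
    fip X (Y - Z) = fip X Y - fip X Z := by
  simp [fip, Matrix.sub_apply, mul_sub, Finset.sum_sub_distrib]

lemma fip_smul_right {m k : ℕ} (c : ℝ) (X Y : Matrix (Fin m) (Fin k) ℝ) :
    fip X (c • Y) = c * fip X Y := by
  unfold fip
  rw [Finset.mul_sum]
  refine Finset.sum_congr rfl fun i _ => ?_
  rw [Finset.mul_sum]
  refine Finset.sum_congr rfl fun j _ => ?_
  simp [Matrix.smul_apply]
  ring

lemma fip_projT_adj {n r : ℕ} (U V : Matrix (Fin n) (Fin r) ℝ)
    (X Y : Matrix (Fin n) (Fin n) ℝ) :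
    fip (projT U V X) Y = fip X (projT U V Y) := by
  unfold projT
  rw [fip_sub_left, fip_add_left, fip_sub_right, fip_add_right]
  have t1 : fip (U * Uᵀ * X) Y = fip X (U * Uᵀ * Y) := by
    rw [fip_mul_left]
    simp [Matrix.transpose_mul]
  have t2 : fip (X * V * Vᵀ) Y = fip X (Y * V * Vᵀ) := by
    rw [Matrix.mul_assoc, fip_mul_right]
    simp [Matrix.transpose_mul, Matrix.mul_assoc]
  have t3 : fip (U * Uᵀ * X * V * Vᵀ) Y = fip X (U * Uᵀ * Y * V * Vᵀ) := by
    rw [Matrix.mul_assoc (U * Uᵀ * X) V Vᵀ, Matrix.mul_assoc (U * Uᵀ) X (V * Vᵀ),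
      fip_mul_left, fip_mul_right]
    simp [Matrix.transpose_mul, Matrix.transpose_transpose, Matrix.mul_assoc]
  rw [t1, t2, t3]

lemma projT_idem {n r : ℕ} (U V : Matrix (Fin n) (Fin r) ℝ)
    (hU : Uᵀ * U = 1) (hV : Vᵀ * V = 1) (Z : Matrix (Fin n) (Fin n) ℝ) :
    projT U V (projT U V Z) = projT U V Z := by
  have hP0 : U * Uᵀ * U = U := by rw [Matrix.mul_assoc, hU, Matrix.mul_one]
  have hV0 : ∀ A : Matrix (Fin n) (Fin r) ℝ, A * Vᵀ * V = A := fun A => by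
    rw [Matrix.mul_assoc, hV, Matrix.mul_one]
  unfold projT
  simp only [Matrix.add_mul, Matrix.sub_mul, Matrix.mul_add, Matrix.mul_sub,
    ← Matrix.mul_assoc, hP0, hV0]
  abel

lemma sqrt_add_le {x y : ℝ} (hx : 0 ≤ x) (hy : 0 ≤ y) :
    Real.sqrt (x + y) ≤ Real.sqrt x + Real.sqrt y := by
  have h : x + y ≤ (Real.sqrt x + Real.sqrt y) ^ 2 := by
    rw [add_sq, Real.sq_sqrt hx, Real.sq_sqrt hy]
    nlinarith [Real.sqrt_nonneg x, Real.sqrt_nonneg y]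
  calc Real.sqrt (x + y) ≤ Real.sqrt ((Real.sqrt x + Real.sqrt y) ^ 2) := Real.sqrt_le_sqrt h
    _ = Real.sqrt x + Real.sqrt y := Real.sqrt_sq (by positivity)

lemma sqrt_sum_le {ι : Type*} (s : Finset ι) (f : ι → ℝ) (hf : ∀ i ∈ s, 0 ≤ f i) :
    Real.sqrt (∑ i ∈ s, f i) ≤ ∑ i ∈ s, Real.sqrt (f i) := by
  induction s using Finset.cons_induction with
  | empty => simp
  | cons a s ha ih =>
      rw [Finset.sum_cons, Finset.sum_cons]
      have h1 : 0 ≤ f a := hf a (Finset.mem_cons_self a s)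
      have h2 : ∀ i ∈ s, 0 ≤ f i := fun i hi => hf i (Finset.mem_cons_of_mem hi)
      calc Real.sqrt (f a + ∑ i ∈ s, f i)
          ≤ Real.sqrt (f a) + Real.sqrt (∑ i ∈ s, f i) :=
            sqrt_add_le h1 (Finset.sum_nonneg h2)
        _ ≤ Real.sqrt (f a) + ∑ i ∈ s, Real.sqrt (f i) := by
            gcongr
            exact ih h2

lemma trace_eq_sum_eig {k : ℕ} (A : Matrix (Fin k) (Fin k) ℝ) (hA : A.IsHermitian) :
    Matrix.trace A = ∑ i, hA.eigenvalues i := by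
  rw [hA.trace_eq_sum_eigenvalues]
  simp

lemma frob_le_nuclear {m k : ℕ} (X : Matrix (Fin m) (Fin k) ℝ) :
    frobNorm X ≤ nuclearNorm X := by
  have hA : (Xᵀ * X).IsHermitian := by
    simpa only [Matrix.conjTranspose_eq_transpose_of_trivial] using
      Matrix.isHermitian_conjTranspose_mul_self X
  have hPSD : (Xᵀ * X).PosSemidef := by
    simpa only [Matrix.conjTranspose_eq_transpose_of_trivial] using
      Matrix.posSemidef_conjTranspose_mul_self X
  have hnn : ∀ i, 0 ≤ hA.eigenvalues i := fun i => hPSD.eigenvalues_nonneg i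
  have htr : (∑ i, ∑ j, (X i j) ^ 2) = Matrix.trace (Xᵀ * X) := by
    unfold Matrix.trace
    simp only [Matrix.diag_apply, Matrix.mul_apply, Matrix.transpose_apply]
    rw [Finset.sum_comm]
    exact Finset.sum_congr rfl fun i _ => Finset.sum_congr rfl fun j _ => by rw [sq]
  rw [frobNorm, htr, trace_eq_sum_eig _ hA, nuclearNorm]
  exact sqrt_sum_le _ _ fun i _ => hnn i

lemma nuclear_nonneg {m k : ℕ} (X : Matrix (Fin m) (Fin k) ℝ) : 0 ≤ nuclearNorm X := by
  unfold nuclearNorm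
  exact Finset.sum_nonneg fun i _ => Real.sqrt_nonneg _

lemma frob_projS_le {n : ℕ} (Ω : Set (Fin n × Fin n)) (X : Matrix (Fin n) (Fin n) ℝ) :
    frobNorm (projS Ω X) ≤ frobNorm X := by
  unfold frobNorm
  apply Real.sqrt_le_sqrt
  refine Finset.sum_le_sum fun i _ => Finset.sum_le_sum fun j _ => ?_
  unfold projS
  split
  · exact le_refl _
  · simpa using sq_nonneg (X i j)

lemma fip_projS_eq {n : ℕ} (Ω : Set (Fin n × Fin n)) (W : Matrix (Fin n) (Fin n) ℝ) :
    fip W (projS Ω W) = frobNorm (projS Ω W) ^ 2 := by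
  rw [frob_sq]
  unfold fip projS
  refine Finset.sum_congr rfl fun i _ => Finset.sum_congr rfl fun j _ => ?_
  by_cases h : (i, j) ∈ Ω <;> simp [h]

lemma projS_smul {n : ℕ} (Ω : Set (Fin n × Fin n)) (c : ℝ) (X : Matrix (Fin n) (Fin n) ℝ) :
    projS Ω (c • X) = c • projS Ω X := by
  funext i j
  simp only [projS, Matrix.smul_apply, smul_eq_mul]
  split <;> simp

lemma projT_smul {n r : ℕ} (U V : Matrix (Fin n) (Fin r) ℝ) (c : ℝ)
    (X : Matrix (Fin n) (Fin n) ℝ) : projT U V (c • X) = c • projT U V X := by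
  unfold projT
  simp [Matrix.smul_mul, Matrix.mul_smul, smul_sub, smul_add]

lemma frob_sub_le {m k : ℕ} (X Y : Matrix (Fin m) (Fin k) ℝ) :
    frobNorm (X - Y) ≤ frobNorm X + frobNorm Y := by
  rw [frob_eq_norm, frob_eq_norm, frob_eq_norm]
  exact norm_sub_le X Y

lemma frob_mul_le {a b c : ℕ} (X : Matrix (Fin a) (Fin b) ℝ) (Y : Matrix (Fin b) (Fin c) ℝ) :
    frobNorm (X * Y) ≤ frobNorm X * frobNorm Y := by
  rw [frob_eq_norm, frob_eq_norm, frob_eq_norm]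
  exact Matrix.frobenius_norm_mul X Y

lemma projT_bound {n r : ℕ} (U V : Matrix (Fin n) (Fin r) ℝ) (X : Matrix (Fin n) (Fin n) ℝ) :
    frobNorm (projT U V X) ≤
      (frobNorm (U * Uᵀ) + frobNorm (V * Vᵀ) + frobNorm (U * Uᵀ) * frobNorm (V * Vᵀ)) *
        frobNorm X := by
  have h1 : frobNorm (U * Uᵀ * X) ≤ frobNorm (U * Uᵀ) * frobNorm X := frob_mul_le _ _
  have h2 : frobNorm (X * V * Vᵀ) ≤ frobNorm X * frobNorm (V * Vᵀ) := by
    rw [Matrix.mul_assoc]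
    exact frob_mul_le _ _
  have h3 : frobNorm (U * Uᵀ * X * V * Vᵀ) ≤
      frobNorm (U * Uᵀ) * (frobNorm X * frobNorm (V * Vᵀ)) := by
    rw [Matrix.mul_assoc (U * Uᵀ * X) V Vᵀ, Matrix.mul_assoc (U * Uᵀ) X (V * Vᵀ)]
    refine le_trans (frob_mul_le _ _) ?_
    exact mul_le_mul_of_nonneg_left (frob_mul_le _ _) (frob_nonneg _)
  have htri : frobNorm (projT U V X) ≤ frobNorm (U * Uᵀ * X) + frobNorm (X * V * Vᵀ)
      + frobNorm (U * Uᵀ * X * V * Vᵀ) := by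
    unfold projT
    rw [frob_eq_norm, frob_eq_norm, frob_eq_norm, frob_eq_norm]
    calc ‖U * Uᵀ * X + X * V * Vᵀ - U * Uᵀ * X * V * Vᵀ‖
        ≤ ‖U * Uᵀ * X + X * V * Vᵀ‖ + ‖U * Uᵀ * X * V * Vᵀ‖ := norm_sub_le _ _
      _ ≤ ‖U * Uᵀ * X‖ + ‖X * V * Vᵀ‖ + ‖U * Uᵀ * X * V * Vᵀ‖ := by
          have := norm_add_le (U * Uᵀ * X) (X * V * Vᵀ)
          linarith
  nlinarith [frob_nonneg X, frob_nonneg (U * Uᵀ), frob_nonneg (V * Vᵀ)]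

lemma opNorm_bound {n : ℕ} (A : Matrix (Fin n) (Fin n) ℝ → Matrix (Fin n) (Fin n) ℝ)
    (C : ℝ) (hC : ∀ X, frobNorm (A X) ≤ C * frobNorm X)
    (hhom : ∀ (c : ℝ) X, A (c • X) = c • A X) (X : Matrix (Fin n) (Fin n) ℝ) :
    frobNorm (A X) ≤ opNormMap A * frobNorm X := by
  rcases eq_or_lt_of_le (frob_nonneg X) with h0 | hpos
  · have hX : X = 0 := frob_eq_zero h0.symm
    have hA0 : A X = 0 := by
      rw [hX]
      have h := hhom 0 0
      rwa [zero_smul, zero_smul] at h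
    rw [hA0, frob_zero, ← h0, mul_zero]
  · set c : ℝ := (frobNorm X)⁻¹ with hc
    have hcpos : 0 < c := inv_pos.mpr hpos
    have hX0 : frobNorm (c • X) ≤ 1 := by
      rw [frob_smul, abs_of_pos hcpos, hc, inv_mul_cancel₀ (ne_of_gt hpos)]
    have hb : BddAbove (Set.range fun Z : {Z : Matrix (Fin n) (Fin n) ℝ // frobNorm Z ≤ 1} =>
        frobNorm (A Z.1)) := by
      refine ⟨max C 0 , ?_⟩
      rintro y ⟨Z, rfl⟩
      calc frobNorm (A Z.1) ≤ C * frobNorm Z.1 := hC _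
        _ ≤ max C 0 * frobNorm Z.1 := mul_le_mul_of_nonneg_right (le_max_left _ _) (frob_nonneg _)
        _ ≤ max C 0 * 1 := mul_le_mul_of_nonneg_left Z.2 (le_max_right _ _)
        _ = max C 0 := mul_one _
    have hle : frobNorm (A (c • X)) ≤ opNormMap A :=
      le_ciSup hb (⟨c • X, hX0⟩ : {Z : Matrix (Fin n) (Fin n) ℝ // frobNorm Z ≤ 1})
    rw [hhom, frob_smul, abs_of_pos hcpos] at hle
    calc frobNorm (A X) = frobNorm X * (c * frobNorm (A X)) := by
          rw [hc]; field_simp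
      _ ≤ frobNorm X * opNormMap A := mul_le_mul_of_nonneg_left hle (le_of_lt hpos)
      _ = opNormMap A * frobNorm X := mul_comm _ _

end S5

/-- Lemma: null-space bound.
If p ≥ 1/n^{10} and ‖P_T R_Ω P_T − P_T‖_op ≤ 1/2, then every Z with P_Ω(Z) = 0
satisfies ‖P_T(Z)‖_F ≤ √2 n⁵ ‖P_{T⊥}(Z)‖_*. -/
theorem statement5 (n r : ℕ) (M : Matrix (Fin n) (Fin n) ℝ)
    (U V : Matrix (Fin n) (Fin r) ℝ) (S : Matrix (Fin r) (Fin r) ℝ)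
    (Ω : Set (Fin n × Fin n)) (p : ℝ)
    -- reduced SVD of M with rank r
    (hU : Uᵀ * U = 1) (hV : Vᵀ * V = 1)
    (hSdiag : ∀ i j, i ≠ j → S i j = 0) (hSpos : ∀ i, 0 < S i i)
    (hM : M = U * S * Vᵀ)
    (hp : 1 / (n : ℝ) ^ 10 ≤ p)
    (hop : opNormMap
      (fun Z => projT U V (p⁻¹ • projS Ω (projT U V Z)) - projT U V Z) ≤ 1 / 2) :
    ∀ Z : Matrix (Fin n) (Fin n) ℝ, projS Ω Z = 0 →
      frobNorm (projT U V Z) ≤ Real.sqrt 2 * (n : ℝ) ^ 5 * nuclearNorm (Z - projT U V Z) := by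
  intro Z hZ
  rcases Nat.eq_zero_or_pos n with hn | hn
  · subst hn
    simp [frobNorm]
  -- main case
  have hnpos : (0 : ℝ) < (n : ℝ) ^ 10 := by positivity
  have hppos : 0 < p := lt_of_lt_of_le (by positivity) hp
  have hpinv : p⁻¹ ≤ (n : ℝ) ^ 10 := by
    have h := one_div_le_one_div_of_le (by positivity : (0:ℝ) < 1 / (n:ℝ)^10) hp
    rwa [one_div_one_div, one_div] at h
  set W := projT U V Z with hWdef
  have hWidem : projT U V W = W := S5.projT_idem U V hU hV Z
  set A : Matrix (Fin n) (Fin n) ℝ → Matrix (Fin n) (Fin n) ℝ :=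
    fun X => projT U V (p⁻¹ • projS Ω (projT U V X)) - projT U V X with hAdef
  have hhom : ∀ (c : ℝ) X, A (c • X) = c • A X := by
    intro c X
    simp only [hAdef]
    rw [S5.projT_smul U V c X, S5.projS_smul, smul_comm p⁻¹ c, S5.projT_smul, ← smul_sub]
  have hC : ∀ X, frobNorm (A X) ≤
      ((frobNorm (U * Uᵀ) + frobNorm (V * Vᵀ) + frobNorm (U * Uᵀ) * frobNorm (V * Vᵀ)) *
        (|p⁻¹| * (frobNorm (U * Uᵀ) + frobNorm (V * Vᵀ) + frobNorm (U * Uᵀ) * frobNorm (V * Vᵀ)))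
        + (frobNorm (U * Uᵀ) + frobNorm (V * Vᵀ) + frobNorm (U * Uᵀ) * frobNorm (V * Vᵀ)))
        * frobNorm X := by
    intro X
    set CT := frobNorm (U * Uᵀ) + frobNorm (V * Vᵀ) + frobNorm (U * Uᵀ) * frobNorm (V * Vᵀ)
      with hCT
    have hCT0 : 0 ≤ CT := by
      have := S5.frob_nonneg (U * Uᵀ)
      have := S5.frob_nonneg (V * Vᵀ)
      nlinarith
    have h1 : frobNorm (projT U V X) ≤ CT * frobNorm X := S5.projT_bound U V X
    have h2 : frobNorm (projT U V (p⁻¹ • projS Ω (projT U V X))) ≤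
        CT * (|p⁻¹| * (CT * frobNorm X)) := by
      refine le_trans (S5.projT_bound U V _) ?_
      refine mul_le_mul_of_nonneg_left ?_ hCT0
      rw [S5.frob_smul]
      refine mul_le_mul_of_nonneg_left ?_ (abs_nonneg _)
      exact le_trans (S5.frob_projS_le _ _) h1
    have htri : frobNorm (A X) ≤ frobNorm (projT U V (p⁻¹ • projS Ω (projT U V X)))
        + frobNorm (projT U V X) := by
      simp only [hAdef]
      exact S5.frob_sub_le _ _
    nlinarith [S5.frob_nonneg X, abs_nonneg p⁻¹]
  have hAbd : ∀ X, frobNorm (A X) ≤ opNormMap A * frobNorm X :=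
    S5.opNorm_bound A _ hC hhom
  have hbound : frobNorm (A W) ≤ (1 / 2) * frobNorm W :=
    le_trans (hAbd W) (mul_le_mul_of_nonneg_right hop (S5.frob_nonneg W))
  have hAW : A W = projT U V (p⁻¹ • projS Ω W) - W := by
    simp only [hAdef]
    rw [hWidem]
  have hfip : S5.fip W (A W) = p⁻¹ * frobNorm (projS Ω W) ^ 2 - frobNorm W ^ 2 := by
    rw [hAW, S5.fip_sub_right, ← S5.frob_sq]
    congr 1
    rw [← S5.fip_projT_adj, hWidem, S5.fip_smul_right, S5.fip_projS_eq]
  have hCS : -(frobNorm W * frobNorm (A W)) ≤ S5.fip W (A W) := S5.neg_frob_le_fip _ _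
  have hmul : frobNorm W * frobNorm (A W) ≤ frobNorm W * ((1 / 2) * frobNorm W) :=
    mul_le_mul_of_nonneg_left hbound (S5.frob_nonneg W)
  have hhalf : (1 / 2) * frobNorm W ^ 2 ≤ p⁻¹ * frobNorm (projS Ω W) ^ 2 := by
    nlinarith [hCS, hmul, hfip]
  -- bound ‖P_Ω W‖ by the nuclear norm of Z - W
  have hPSeq : projS Ω W = -(projS Ω (Z - W)) := by
    funext i j
    have hZij := congrFun (congrFun hZ i) j
    simp only [projS, Matrix.sub_apply, Matrix.neg_apply, Matrix.zero_apply] at hZij ⊢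
    split_ifs with h
    · rw [if_pos h] at hZij
      rw [hZij]
      ring
    · rw [if_neg h] at hZij
      simp
  have hPS : frobNorm (projS Ω W) ≤ nuclearNorm (Z - W) := by
    calc frobNorm (projS Ω W) = frobNorm (projS Ω (Z - W)) := by rw [hPSeq, S5.frob_neg]
      _ ≤ frobNorm (Z - W) := S5.frob_projS_le _ _
      _ ≤ nuclearNorm (Z - W) := S5.frob_le_nuclear _
  have hN0 : 0 ≤ nuclearNorm (Z - W) := S5.nuclear_nonneg _
  have hsq : frobNorm W ^ 2 ≤ 2 * (n : ℝ) ^ 10 * nuclearNorm (Z - W) ^ 2 := by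
    have h1 : frobNorm (projS Ω W) ^ 2 ≤ nuclearNorm (Z - W) ^ 2 :=
      pow_le_pow_left₀ (S5.frob_nonneg _) hPS 2
    have h2 : p⁻¹ * frobNorm (projS Ω W) ^ 2 ≤ (n : ℝ) ^ 10 * nuclearNorm (Z - W) ^ 2 :=
      mul_le_mul hpinv h1 (by positivity) (by positivity)
    linarith
  calc frobNorm W = Real.sqrt (frobNorm W ^ 2) := (Real.sqrt_sq (S5.frob_nonneg W)).symm
    _ ≤ Real.sqrt (2 * (n : ℝ) ^ 10 * nuclearNorm (Z - W) ^ 2) := Real.sqrt_le_sqrt hsq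
    _ = Real.sqrt 2 * (n : ℝ) ^ 5 * nuclearNorm (Z - W) := by
        rw [show 2 * (n : ℝ) ^ 10 * nuclearNorm (Z - W) ^ 2
            = 2 * ((n : ℝ) ^ 5 * nuclearNorm (Z - W)) ^ 2 by ring,
          Real.sqrt_mul (by norm_num), Real.sqrt_sq (by positivity), mul_assoc]

end
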